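/- Let A ∈ ℝ^{n×n}, B ∈ ℝ^{n×m}, C ∈ ℝ^{m×n} with C = BᵀQ for some Q = Qᵀ ≻ 0, and suppose X = Xᵀ ≻ 0 solves the KYP-LMI, i.e., [[−AᵀX − XA, Cᵀ − XB], [C − BᵀX, 0]] ⪰ 0. Define J_X = (1/2)(A X⁻¹ − X⁻¹Aᵀ) and R_X = −(1/2)(A X⁻¹ + X⁻¹Aᵀ). Then J_X is skew-symmetric, R_X is symmetric positive semidefinite, (J_X − R_X)X = A, and BᵀX = C. -/

import Mathlib

open Matrix

lemma lin_nonneg_coeff_zero {a c : ℝ} (h : ∀ t : ℝ, 0 ≤ a + t * c) : c = 0 := by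
  by_contra hc
  have h1 := h (-(a + 1) / c)
  rw [div_mul_cancel₀ _ hc] at h1
  linarith

lemma psd_offdiag_zero {p : Type*} [Fintype p] {M : Matrix p p ℝ} (hM : M.PosSemidef)
    (v w : p → ℝ) (hw : w ⬝ᵥ (M *ᵥ w) = 0) : v ⬝ᵥ (M *ᵥ w) = 0 := by
  have hsym : ∀ x y : p → ℝ, x ⬝ᵥ (M *ᵥ y) = y ⬝ᵥ (M *ᵥ x) := by
    intro x y
    have hMt : Mᵀ = M := (Matrix.conjTranspose_eq_transpose_of_trivial M).symm.trans hM.1.eq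
    rw [dotProduct_mulVec, ← Matrix.mulVec_transpose, hMt, dotProduct_comm]
  have key : ∀ t : ℝ, 0 ≤ (v ⬝ᵥ (M *ᵥ v)) + t * (2 * (v ⬝ᵥ (M *ᵥ w))) := by
    intro t
    have h0 := hM.dotProduct_mulVec_nonneg (v + t • w)
    simp only [star_trivial] at h0
    have hexp : (v + t • w) ⬝ᵥ (M *ᵥ (v + t • w))
        = v ⬝ᵥ (M *ᵥ v) + t * (2 * (v ⬝ᵥ (M *ᵥ w))) + t * t * (w ⬝ᵥ (M *ᵥ w)) := by
      rw [Matrix.mulVec_add, Matrix.mulVec_smul, add_dotProduct, smul_dotProduct,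
        dotProduct_add, dotProduct_add, dotProduct_smul, dotProduct_smul, hsym w v]
      simp only [smul_eq_mul]
      ring
    rw [hexp, hw] at h0
    simpa using h0
  have := lin_nonneg_coeff_zero key
  linarith

lemma single_mulVec_single {p : Type*} [Fintype p] [DecidableEq p]
    (N : Matrix p p ℝ) (a b : p) :
    Pi.single a 1 ⬝ᵥ (N *ᵥ Pi.single b 1) = N a b := by
  simp [dotProduct, Matrix.mulVec, Pi.single_apply, mul_ite, ite_mul]

lemma psd_smul_half {p : Type*} [Fintype p] {M : Matrix p p ℝ} (hM : M.PosSemidef) :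
    ((1 / 2 : ℝ) • M).PosSemidef := by
  refine posSemidef_iff_dotProduct_mulVec.mpr ⟨?_, ?_⟩
  · unfold Matrix.IsHermitian
    rw [conjTranspose_smul, hM.1.eq]
    simp
  · intro x
    have := hM.dotProduct_mulVec_nonneg x
    simp only [star_trivial, Matrix.smul_mulVec, dotProduct_smul, smul_eq_mul] at *
    linarith

/-- Every symmetric positive definite solution `X` of the KYP-LMI gives rise to an
alternative port-Hamiltonian representation of the same system. -/
theorem stmt4 {n m : ℕ} (A Q X : Matrix (Fin n) (Fin n) ℝ)
    (B : Matrix (Fin n) (Fin m) ℝ) (C : Matrix (Fin m) (Fin n) ℝ)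
    (hQ : Q.PosDef) (hC : C = Bᵀ * Q) (hX : X.PosDef)
    (hKYP : (Matrix.fromBlocks (-(Aᵀ * X) - X * A) (Cᵀ - X * B) (C - Bᵀ * X) 0).PosSemidef) :
    ((1 / 2 : ℝ) • (A * X⁻¹ - X⁻¹ * Aᵀ))ᵀ = -((1 / 2 : ℝ) • (A * X⁻¹ - X⁻¹ * Aᵀ)) ∧
    (-((1 / 2 : ℝ) • (A * X⁻¹ + X⁻¹ * Aᵀ))).PosSemidef ∧
    ((1 / 2 : ℝ) • (A * X⁻¹ - X⁻¹ * Aᵀ) - -((1 / 2 : ℝ) • (A * X⁻¹ + X⁻¹ * Aᵀ))) * X = A ∧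
    Bᵀ * X = C := by
  have hXsym : Xᵀ = X := hX.isHermitian.eq
  have hdet : IsUnit X.det := isUnit_iff_ne_zero.mpr hX.det_pos.ne'
  have hXisym : X⁻¹ᵀ = X⁻¹ := by rw [Matrix.transpose_nonsing_inv, hXsym]
  have hXXinv : X * X⁻¹ = 1 := Matrix.mul_nonsing_inv X hdet
  have hXinvX : X⁻¹ * X = 1 := Matrix.nonsing_inv_mul X hdet
  have h11 : (-(Aᵀ * X) - X * A).PosSemidef := by
    refine posSemidef_iff_dotProduct_mulVec.mpr ⟨?_, ?_⟩
    · unfold Matrix.IsHermitian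
      simp only [conjTranspose_eq_transpose_of_trivial, Matrix.transpose_sub,
        Matrix.transpose_neg, Matrix.transpose_mul, Matrix.transpose_transpose, hXsym]
      abel
    · intro x
      have h0 := hKYP.dotProduct_mulVec_nonneg (Sum.elim x 0)
      simp only [star_trivial] at h0 ⊢
      rw [Matrix.fromBlocks_mulVec] at h0
      simpa using h0
  refine ⟨?_, ?_, ?_, ?_⟩
  · rw [transpose_smul, Matrix.transpose_sub, Matrix.transpose_mul, Matrix.transpose_mul,
      hXisym]
    rw [← smul_neg]
    congr 1
    abel
  · have h2 : (X⁻¹ * (-(Aᵀ * X) - X * A) * X⁻¹ᴴ).PosSemidef :=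
      h11.mul_mul_conjTranspose_same X⁻¹
    have heq : X⁻¹ * (-(Aᵀ * X) - X * A) * X⁻¹ᴴ = -(A * X⁻¹ + X⁻¹ * Aᵀ) := by
      have hH : (X⁻¹)ᴴ = X⁻¹ := by
        rw [conjTranspose_eq_transpose_of_trivial, hXisym]
      rw [hH, Matrix.mul_sub, Matrix.sub_mul, Matrix.mul_neg, Matrix.neg_mul]
      rw [Matrix.mul_assoc X⁻¹ (Aᵀ * X) X⁻¹, Matrix.mul_assoc Aᵀ X X⁻¹, hXXinv,
        Matrix.mul_one, ← Matrix.mul_assoc X⁻¹ X A, hXinvX, Matrix.one_mul]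
      abel
    rw [heq] at h2
    have := psd_smul_half h2
    rwa [smul_neg] at this
  · have : ((1 / 2 : ℝ) • (A * X⁻¹ - X⁻¹ * Aᵀ) - -((1 / 2 : ℝ) • (A * X⁻¹ + X⁻¹ * Aᵀ)))
        = A * X⁻¹ := by
      rw [sub_neg_eq_add, ← smul_add]
      have : A * X⁻¹ - X⁻¹ * Aᵀ + (A * X⁻¹ + X⁻¹ * Aᵀ) = (2 : ℝ) • (A * X⁻¹) := by
        rw [two_smul]; abel
      rw [this, smul_smul]
      norm_num
    rw [this, Matrix.mul_assoc, hXinvX, Matrix.mul_one]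
  · have hblk : Cᵀ - X * B = 0 := by
      ext i j
      have h0 := psd_offdiag_zero hKYP (Pi.single (Sum.inl i) 1)
        (Pi.single (Sum.inr j) 1) ?_
      · rw [single_mulVec_single] at h0
        simpa [Matrix.fromBlocks] using h0
      · rw [single_mulVec_single]
        simp [Matrix.fromBlocks]
    have hCt : Cᵀ = X * B := sub_eq_zero.mp hblk
    have : C = Bᵀ * Xᵀ := by
      calc C = Cᵀᵀ := (Matrix.transpose_transpose C).symm
        _ = (X * B)ᵀ := by rw [hCt]
        _ = Bᵀ * Xᵀ := Matrix.transpose_mul X B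
    rw [this, hXsym]
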